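/- Let A ∈ ℝ^{n×n} and B ∈ ℝ^{m×m} be real symmetric matrices such that for every λ ∈ ℝ, the Euclidean norm of the orthogonal projection of the all-ones vector 𝟙_n onto ker(A − λI_n) equals the Euclidean norm of the orthogonal projection of 𝟙_m onto ker(B − λI_m). Then there exists a real matrix X ∈ ℝ^{n×m} with AX = XB, X·𝟙_m = 𝟙_n, and X^T·𝟙_n = 𝟙_m. -/

import Mathlib

set_option maxHeartbeats 1000000

open Matrix Finset
open scoped InnerProductSpace

noncomputable section Stmt6Aux

lemma stmt6_mem_ker_iff {k : ℕ} (M : Matrix (Fin k) (Fin k) ℝ) (x : EuclideanSpace ℝ (Fin k))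
    (μ : ℝ) :
    x ∈ LinearMap.ker (Matrix.toEuclideanLin (M - μ • 1)) ↔ Matrix.toEuclideanLin M x = μ • x := by
  rw [LinearMap.mem_ker, map_sub, LinearEquiv.map_smul, LinearMap.sub_apply,
    LinearMap.smul_apply, sub_eq_zero]
  have h1 : Matrix.toEuclideanLin (1 : Matrix (Fin k) (Fin k) ℝ) x = x := by
    show WithLp.toLp 2 ((1 : Matrix (Fin k) (Fin k) ℝ) *ᵥ x.ofLp) = x
    simp
  rw [h1]

lemma stmt6_proj_eq {k : ℕ} (M : Matrix (Fin k) (Fin k) ℝ)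
    (U : OrthonormalBasis (Fin k) ℝ (EuclideanSpace ℝ (Fin k)))
    (α : Fin k → ℝ) (hU : ∀ i, Matrix.toEuclideanLin M (U i) = α i • U i)
    (hM : M.IsSymm) (μ : ℝ) (v : EuclideanSpace ℝ (Fin k)) :
    (Submodule.orthogonalProjectionOnto (LinearMap.ker (Matrix.toEuclideanLin (M - μ • 1))) v
        : EuclideanSpace ℝ (Fin k))
      = ∑ i ∈ univ.filter (fun i => α i = μ), ⟪U i, v⟫_ℝ • (U i : EuclideanSpace ℝ (Fin k)) := by
  have hsym : (Matrix.toEuclideanLin M).IsSymmetric := by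
    rw [← Matrix.isHermitian_iff_isSymmetric, Matrix.IsHermitian,
      Matrix.conjTranspose_eq_transpose_of_trivial]
    exact hM
  rw [← Submodule.starProjection_apply]
  apply Submodule.eq_starProjection_of_mem_of_inner_eq_zero
  · apply Submodule.sum_mem
    intro i hi
    apply Submodule.smul_mem
    rw [stmt6_mem_ker_iff, hU i, (mem_filter.mp hi).2]
  · intro w hw
    rw [stmt6_mem_ker_iff] at hw
    have key : ∀ i, α i ≠ μ → ⟪U i, w⟫_ℝ = 0 := by
      intro i hi
      have h1 : ⟪Matrix.toEuclideanLin M (U i), w⟫_ℝ = ⟪U i, Matrix.toEuclideanLin M w⟫_ℝ :=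
        hsym (U i) w
      rw [hU i, hw, real_inner_smul_left, real_inner_smul_right] at h1
      have h2 : (α i - μ) * ⟪U i, w⟫_ℝ = 0 := by ring_nf; linarith [h1]
      rcases mul_eq_zero.mp h2 with h | h
      · exact absurd (sub_eq_zero.mp h) hi
      · exact h
    rw [inner_sub_left, sub_eq_zero, ← OrthonormalBasis.sum_inner_mul_inner U v w]
    rw [sum_inner]
    rw [← Finset.sum_filter_add_sum_filter_not univ (fun i => α i = μ)
      (fun i => ⟪v, U i⟫_ℝ * ⟪U i, w⟫_ℝ)]
    have hz : ∑ i ∈ univ.filter (fun i => ¬ α i = μ), ⟪v, U i⟫_ℝ * ⟪U i, w⟫_ℝ = 0 := by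
      apply Finset.sum_eq_zero
      intro i hi
      rw [key i (mem_filter.mp hi).2, mul_zero]
    rw [hz, add_zero]
    apply Finset.sum_congr rfl
    intro i _
    rw [real_inner_smul_left, real_inner_comm v (U i)]

lemma stmt6_norm_proj_sq {k : ℕ} (M : Matrix (Fin k) (Fin k) ℝ)
    (U : OrthonormalBasis (Fin k) ℝ (EuclideanSpace ℝ (Fin k)))
    (α : Fin k → ℝ) (hU : ∀ i, Matrix.toEuclideanLin M (U i) = α i • U i)
    (hM : M.IsSymm) (μ : ℝ) (v : EuclideanSpace ℝ (Fin k)) :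
    ‖Submodule.orthogonalProjectionOnto (LinearMap.ker (Matrix.toEuclideanLin (M - μ • 1))) v‖ ^ 2
      = ∑ i ∈ univ.filter (fun i => α i = μ), ⟪U i, v⟫_ℝ ^ 2 := by
  rw [Submodule.coe_norm, ← real_inner_self_eq_norm_sq, stmt6_proj_eq M U α hU hM μ v,
    U.orthonormal.inner_sum]
  simp [pow_two]

-- helper matrix lemmas
lemma stmt6_vmv_mulVec {a b : ℕ} (p : Fin a → ℝ) (q : Fin b → ℝ) (r : Fin b → ℝ) :
    vecMulVec p q *ᵥ r = (q ⬝ᵥ r) • p := by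
  ext i
  simp only [vecMulVec_apply, mulVec, dotProduct, Pi.smul_apply, smul_eq_mul, Finset.sum_mul]
  exact Finset.sum_congr rfl fun x _ => by ring

lemma stmt6_mul_vmv {a b : ℕ} (M : Matrix (Fin a) (Fin a) ℝ) (p : Fin a → ℝ) (q : Fin b → ℝ) :
    M * vecMulVec p q = vecMulVec (M *ᵥ p) q := by
  ext i j
  simp only [vecMulVec_apply, mul_apply, mulVec, dotProduct, Finset.sum_mul]
  exact Finset.sum_congr rfl fun x _ => by ring

lemma stmt6_vmv_mul {a b : ℕ} (M : Matrix (Fin b) (Fin b) ℝ) (p : Fin a → ℝ) (q : Fin b → ℝ) :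
    vecMulVec p q * M = vecMulVec p (q ᵥ* M) := by
  ext i j
  simp only [vecMulVec_apply, mul_apply, vecMul, dotProduct, Finset.mul_sum]
  exact Finset.sum_congr rfl fun x _ => by ring

lemma stmt6_vmv_transpose {a b : ℕ} (p : Fin a → ℝ) (q : Fin b → ℝ) :
    (vecMulVec p q)ᵀ = vecMulVec q p := by
  ext i j; simp [vecMulVec_apply, mul_comm]

lemma stmt6_sum_mulVec {a b : ℕ} {ι : Type*} (s : Finset ι) (f : ι → Matrix (Fin a) (Fin b) ℝ)
    (r : Fin b → ℝ) : (∑ i ∈ s, f i) *ᵥ r = ∑ i ∈ s, f i *ᵥ r := by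
  ext j
  simp only [mulVec, dotProduct, Finset.sum_apply, Matrix.sum_apply, Finset.sum_mul]
  rw [Finset.sum_comm]

end Stmt6Aux

theorem stmt6 (n m : ℕ) (A : Matrix (Fin n) (Fin n) ℝ) (B : Matrix (Fin m) (Fin m) ℝ)
    (hA : A.IsSymm) (hB : B.IsSymm)
    (h : ∀ μ : ℝ,
      ‖Submodule.orthogonalProjectionOnto (LinearMap.ker (Matrix.toEuclideanLin (A - μ • 1)))
          (WithLp.toLp 2 (fun _ => 1 : Fin n → ℝ) : EuclideanSpace ℝ (Fin n))‖ =
      ‖Submodule.orthogonalProjectionOnto (LinearMap.ker (Matrix.toEuclideanLin (B - μ • 1)))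
          (WithLp.toLp 2 (fun _ => 1 : Fin m → ℝ) : EuclideanSpace ℝ (Fin m))‖) :
    ∃ X : Matrix (Fin n) (Fin m) ℝ,
      A * X = X * B ∧
      X *ᵥ (fun _ => 1) = (fun _ => 1) ∧
      Xᵀ *ᵥ (fun _ => 1) = (fun _ => 1) := by
  classical
  have hsA : (Matrix.toEuclideanLin A).IsSymmetric := by
    rw [← Matrix.isHermitian_iff_isSymmetric, Matrix.IsHermitian,
      Matrix.conjTranspose_eq_transpose_of_trivial]
    exact hA
  have hsB : (Matrix.toEuclideanLin B).IsSymmetric := by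
    rw [← Matrix.isHermitian_iff_isSymmetric, Matrix.IsHermitian,
      Matrix.conjTranspose_eq_transpose_of_trivial]
    exact hB
  obtain ⟨U, α, hU⟩ : ∃ (U : OrthonormalBasis (Fin n) ℝ (EuclideanSpace ℝ (Fin n)))
      (α : Fin n → ℝ), ∀ i, Matrix.toEuclideanLin A (U i) = α i • U i :=
    ⟨hsA.eigenvectorBasis finrank_euclideanSpace_fin,
      hsA.eigenvalues finrank_euclideanSpace_fin,
      fun i => by exact_mod_cast hsA.apply_eigenvectorBasis finrank_euclideanSpace_fin i⟩
  obtain ⟨V, β, hV⟩ : ∃ (V : OrthonormalBasis (Fin m) ℝ (EuclideanSpace ℝ (Fin m)))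
      (β : Fin m → ℝ), ∀ j, Matrix.toEuclideanLin B (V j) = β j • V j :=
    ⟨hsB.eigenvectorBasis finrank_euclideanSpace_fin,
      hsB.eigenvalues finrank_euclideanSpace_fin,
      fun j => by exact_mod_cast hsB.apply_eigenvectorBasis finrank_euclideanSpace_fin j⟩
  set oneN : EuclideanSpace ℝ (Fin n) := WithLp.toLp 2 (fun _ => 1 : Fin n → ℝ) with honeN
  set oneM : EuclideanSpace ℝ (Fin m) := WithLp.toLp 2 (fun _ => 1 : Fin m → ℝ) with honeM
  obtain ⟨c, hc⟩ : ∃ c : Fin n → ℝ, ∀ i, c i = ⟪U i, oneN⟫_ℝ := ⟨_, fun _ => rfl⟩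
  obtain ⟨d, hd⟩ : ∃ d : Fin m → ℝ, ∀ j, d j = ⟪V j, oneM⟫_ℝ := ⟨_, fun _ => rfl⟩
  obtain ⟨w, hw⟩ : ∃ w : ℝ → ℝ,
      ∀ μ, w μ = ∑ i ∈ univ.filter (fun i => α i = μ), c i ^ 2 := ⟨_, fun _ => rfl⟩
  -- the key equality of fiberwise sums of squares
  have key : ∀ μ, w μ = ∑ j ∈ univ.filter (fun j => β j = μ), d j ^ 2 := by
    intro μ
    rw [hw μ]
    rw [Finset.sum_congr rfl (fun i _ => by rw [hc i]),
      Finset.sum_congr rfl (fun j (_ : j ∈ univ.filter (fun j => β j = μ)) => by rw [hd j])]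
    rw [← stmt6_norm_proj_sq A U α hU hA μ oneN, ← stmt6_norm_proj_sq B V β hV hB μ oneM, h μ]
  -- pointwise eigen relations
  have hUx : ∀ (i : Fin n) (x : Fin n), (∑ y, A x y * U i y) = α i * U i x := by
    intro i x
    exact congrArg (fun v : EuclideanSpace ℝ (Fin n) => v x) (hU i)
  have hVx : ∀ (j : Fin m) (y : Fin m), (∑ z, B y z * V j z) = β j * V j y := by
    intro j y
    exact congrArg (fun v : EuclideanSpace ℝ (Fin m) => v y) (hV j)
  have hcx : ∀ i, c i = ∑ x, U i x := by
    intro i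
    rw [hc i, honeN]
    simp [PiLp.inner_apply]
  have hdx : ∀ j, d j = ∑ y, V j y := by
    intro j
    rw [hd j, honeM]
    simp [PiLp.inner_apply]
  -- the vectors p and q as plain functions
  obtain ⟨p, hp⟩ : ∃ p : ℝ → Fin n → ℝ,
      ∀ μ x, p μ x = ∑ i ∈ univ.filter (fun i => α i = μ), c i * U i x := ⟨_, fun _ _ => rfl⟩
  obtain ⟨q, hq⟩ : ∃ q : ℝ → Fin m → ℝ,
      ∀ μ y, q μ y = ∑ j ∈ univ.filter (fun j => β j = μ), d j * V j y := ⟨_, fun _ _ => rfl⟩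
  set Λ : Finset ℝ := (univ.image α) ∪ (univ.image β) with hΛdef
  -- basic facts
  have hp0 : ∀ μ, w μ = 0 → p μ = 0 := by
    intro μ hμ
    rw [hw μ] at hμ
    have hz : ∀ i ∈ univ.filter (fun i => α i = μ), c i ^ 2 = 0 :=
      (Finset.sum_eq_zero_iff_of_nonneg (fun i _ => sq_nonneg (c i))).mp hμ
    funext x
    rw [hp μ x]
    apply Finset.sum_eq_zero
    intro i hi
    rw [(pow_eq_zero_iff two_ne_zero).mp (hz i hi), zero_mul]
  have hq0 : ∀ μ, w μ = 0 → q μ = 0 := by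
    intro μ hμ
    rw [key μ] at hμ
    have hz : ∀ j ∈ univ.filter (fun j => β j = μ), d j ^ 2 = 0 :=
      (Finset.sum_eq_zero_iff_of_nonneg (fun j _ => sq_nonneg (d j))).mp hμ
    funext y
    rw [hq μ y]
    apply Finset.sum_eq_zero
    intro j hj
    rw [(pow_eq_zero_iff two_ne_zero).mp (hz j hj), zero_mul]
  -- sums of entries
  have hpsum : ∀ μ, (p μ) ⬝ᵥ (fun _ => (1:ℝ)) = w μ := by
    intro μ
    rw [hw μ]
    simp only [dotProduct, mul_one]
    rw [Finset.sum_congr rfl (fun x (_ : x ∈ univ) => hp μ x), Finset.sum_comm]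
    apply Finset.sum_congr rfl
    intro i _
    rw [← Finset.mul_sum, ← hcx i, pow_two]
  have hqsum : ∀ μ, (q μ) ⬝ᵥ (fun _ => (1:ℝ)) = w μ := by
    intro μ
    rw [key μ]
    simp only [dotProduct, mul_one]
    rw [Finset.sum_congr rfl (fun y (_ : y ∈ univ) => hq μ y), Finset.sum_comm]
    apply Finset.sum_congr rfl
    intro j _
    rw [← Finset.mul_sum, ← hdx j, pow_two]
  -- eigen-equation for p and q
  have hAp : ∀ μ, A *ᵥ p μ = fun x => μ * p μ x := by
    intro μ
    funext x
    show (∑ y, A x y * p μ y) = μ * p μ x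
    rw [hp μ]
    simp only [Finset.mul_sum]
    rw [Finset.sum_congr rfl (fun y (_ : y ∈ univ) => by rw [hp μ y, Finset.mul_sum]),
      Finset.sum_comm]
    apply Finset.sum_congr rfl
    intro i hi
    rw [show (∑ y, A x y * (c i * U i y)) = c i * ∑ y, A x y * U i y by
      rw [Finset.mul_sum]; exact Finset.sum_congr rfl fun y _ => by ring]
    rw [hUx i x, (mem_filter.mp hi).2]
    ring
  have hBq : ∀ μ, B *ᵥ q μ = fun y => μ * q μ y := by
    intro μ
    funext y
    show (∑ z, B y z * q μ z) = μ * q μ y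
    rw [hq μ]
    simp only [Finset.mul_sum]
    rw [Finset.sum_congr rfl (fun z (_ : z ∈ univ) => by rw [hq μ z, Finset.mul_sum]),
      Finset.sum_comm]
    apply Finset.sum_congr rfl
    intro j hj
    rw [show (∑ z, B y z * (d j * V j z)) = d j * ∑ z, B y z * V j z by
      rw [Finset.mul_sum]; exact Finset.sum_congr rfl fun z _ => by ring]
    rw [hVx j y, (mem_filter.mp hj).2]
    ring
  -- completeness: sum over Λ of p μ is the all-ones vector
  have hpcomp : ∀ x, ∑ μ ∈ Λ, p μ x = 1 := by
    intro x
    have hmaps : ∀ i ∈ (univ : Finset (Fin n)), α i ∈ Λ := by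
      intro i _
      exact Finset.mem_union_left _ (Finset.mem_image_of_mem α (mem_univ i))
    have h1 := Finset.sum_fiberwise_of_maps_to hmaps (fun i => c i * U i x)
    rw [Finset.sum_congr rfl (fun μ (_ : μ ∈ Λ) => hp μ x), h1]
    have h2 := congrArg (fun v : EuclideanSpace ℝ (Fin n) => v x) (U.sum_repr' oneN)
    beta_reduce at h2
    rw [WithLp.ofLp_sum, Finset.sum_apply] at h2
    have h3 : ∀ i : Fin n, (⟪U i, oneN⟫_ℝ • (U i : EuclideanSpace ℝ (Fin n))) x
        = c i * U i x := by
      intro i; rw [hc i]; rfl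
    rw [Finset.sum_congr rfl fun i _ => h3 i] at h2
    rw [h2]
  have hqcomp : ∀ y, ∑ μ ∈ Λ, q μ y = 1 := by
    intro y
    have hmaps : ∀ j ∈ (univ : Finset (Fin m)), β j ∈ Λ := by
      intro j _
      exact Finset.mem_union_right _ (Finset.mem_image_of_mem β (mem_univ j))
    have h1 := Finset.sum_fiberwise_of_maps_to hmaps (fun j => d j * V j y)
    rw [Finset.sum_congr rfl (fun μ (_ : μ ∈ Λ) => hq μ y), h1]
    have h2 := congrArg (fun v : EuclideanSpace ℝ (Fin m) => v y) (V.sum_repr' oneM)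
    beta_reduce at h2
    rw [WithLp.ofLp_sum, Finset.sum_apply] at h2
    have h3 : ∀ j : Fin m, (⟪V j, oneM⟫_ℝ • (V j : EuclideanSpace ℝ (Fin m))) y
        = d j * V j y := by
      intro j; rw [hd j]; rfl
    rw [Finset.sum_congr rfl fun j _ => h3 j] at h2
    rw [h2]
  -- the matrix
  refine ⟨∑ μ ∈ Λ, (w μ)⁻¹ • vecMulVec (p μ) (q μ), ?_, ?_, ?_⟩
  · -- A * X = X * B
    rw [Matrix.mul_sum, Matrix.sum_mul]
    apply Finset.sum_congr rfl
    intro μ _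
    rw [Matrix.mul_smul, Matrix.smul_mul, stmt6_mul_vmv, stmt6_vmv_mul, hAp μ]
    have hvB : (q μ) ᵥ* B = fun y => μ * q μ y := by
      rw [← Matrix.mulVec_transpose, hB, hBq μ]
    rw [hvB]
    congr 1
    ext i j
    simp only [vecMulVec_apply]
    ring
  · -- X *ᵥ 1 = 1
    rw [stmt6_sum_mulVec]
    funext x
    rw [Finset.sum_apply]
    have hterm : ∀ μ ∈ Λ, (((w μ)⁻¹ • vecMulVec (p μ) (q μ)) *ᵥ fun _ => 1) x = p μ x := by
      intro μ _
      rw [smul_mulVec, stmt6_vmv_mulVec, hqsum μ]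
      by_cases hw' : w μ = 0
      · rw [hw', hp0 μ hw']
        simp
      · simp only [Pi.smul_apply, smul_eq_mul]
        field_simp
    rw [Finset.sum_congr rfl hterm]
    exact hpcomp x
  · -- Xᵀ *ᵥ 1 = 1
    rw [Matrix.transpose_sum]
    have htr : ∀ μ ∈ Λ, ((w μ)⁻¹ • vecMulVec (p μ) (q μ))ᵀ
        = (w μ)⁻¹ • vecMulVec (q μ) (p μ) := by
      intro μ _
      rw [Matrix.transpose_smul, stmt6_vmv_transpose]
    rw [Finset.sum_congr rfl htr, stmt6_sum_mulVec]
    funext y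
    rw [Finset.sum_apply]
    have hterm : ∀ μ ∈ Λ, (((w μ)⁻¹ • vecMulVec (q μ) (p μ)) *ᵥ fun _ => 1) y = q μ y := by
      intro μ _
      rw [smul_mulVec, stmt6_vmv_mulVec, hpsum μ]
      by_cases hw' : w μ = 0
      · rw [hw', hq0 μ hw']
        simp
      · simp only [Pi.smul_apply, smul_eq_mul]
        field_simp
    rw [Finset.sum_congr rfl hterm]
    exact hqcomp y
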